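/- Let 𝒳 ⊂ ℝ be a nonempty compact set and let f₁, f₂ : 𝒳 → ℝ be continuous with f₁(x) > 0 and f₂(x) > 0 for all x ∈ 𝒳. Then sup over w ∈ [0,1] and x₁, x₂ ∈ 𝒳 of min{ w·f₁(x₁) + (1−w)·f₁(x₂) , w·f₂(x₁) + (1−w)·f₂(x₂) } equals inf over λ ∈ [0,1] of sup over x ∈ 𝒳 of ( λ·f₁(x) + (1−λ)·f₂(x) ). -/

import Mathlib

open Set Filter Topology

namespace PrimalDualAux

/-- The dual objective `φ(l) = sup_{x ∈ X} (l f₁(x) + (1-l) f₂(x))`. -/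
noncomputable def ph (X : Set ℝ) (f₁ f₂ : ℝ → ℝ) (l : ℝ) : ℝ :=
  sSup ((fun x => l * f₁ x + (1 - l) * f₂ x) '' X)

variable {X : Set ℝ} {f₁ f₂ : ℝ → ℝ}

lemma contOn (hf₁ : ContinuousOn f₁ X) (hf₂ : ContinuousOn f₂ X) (l : ℝ) :
    ContinuousOn (fun x => l * f₁ x + (1 - l) * f₂ x) X :=
  (continuousOn_const.mul hf₁).add (continuousOn_const.mul hf₂)

lemma bddA (hXc : IsCompact X) (hf₁ : ContinuousOn f₁ X) (hf₂ : ContinuousOn f₂ X) (l : ℝ) :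
    BddAbove ((fun x => l * f₁ x + (1 - l) * f₂ x) '' X) :=
  (hXc.image_of_continuousOn (contOn hf₁ hf₂ l)).bddAbove

lemma le_ph (hXc : IsCompact X) (hf₁ : ContinuousOn f₁ X) (hf₂ : ContinuousOn f₂ X)
    {x : ℝ} (hx : x ∈ X) (l : ℝ) :
    l * f₁ x + (1 - l) * f₂ x ≤ ph X f₁ f₂ l :=
  le_csSup (bddA hXc hf₁ hf₂ l) ⟨x, hx, rfl⟩

lemma exists_max (hX : X.Nonempty) (hXc : IsCompact X)
    (hf₁ : ContinuousOn f₁ X) (hf₂ : ContinuousOn f₂ X) (l : ℝ) :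
    ∃ x ∈ X, l * f₁ x + (1 - l) * f₂ x = ph X f₁ f₂ l := by
  obtain ⟨x, hx, hmax⟩ := hXc.exists_isMaxOn hX (contOn hf₁ hf₂ l)
  refine ⟨x, hx, le_antisymm (le_ph hXc hf₁ hf₂ hx l) ?_⟩
  refine csSup_le (hX.image _) ?_
  rintro v ⟨y, hy, rfl⟩
  exact hmax hy

lemma ph_continuous (hX : X.Nonempty) (hXc : IsCompact X)
    (hf₁ : ContinuousOn f₁ X) (hf₂ : ContinuousOn f₂ X) :
    Continuous (ph X f₁ f₂) := by
  obtain ⟨C, hC⟩ := hXc.exists_bound_of_continuousOn (hf₁.sub hf₂)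
  have hC0 : 0 ≤ C := by
    obtain ⟨x₀, hx₀⟩ := hX
    exact (norm_nonneg _).trans (hC x₀ hx₀)
  have key : ∀ l μ : ℝ, ph X f₁ f₂ l ≤ ph X f₁ f₂ μ + C * |l - μ| := by
    intro l μ
    refine csSup_le (hX.image _) ?_
    rintro v ⟨x, hx, rfl⟩
    have h1 : μ * f₁ x + (1 - μ) * f₂ x ≤ ph X f₁ f₂ μ := le_ph hXc hf₁ hf₂ hx μ
    have h2 : (l - μ) * (f₁ x - f₂ x) ≤ C * |l - μ| := by
      calc (l - μ) * (f₁ x - f₂ x) ≤ |(l - μ) * (f₁ x - f₂ x)| := le_abs_self _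
        _ = |f₁ x - f₂ x| * |l - μ| := by rw [abs_mul]; ring
        _ ≤ C * |l - μ| := by
            have := hC x hx
            rw [Real.norm_eq_abs] at this
            exact mul_le_mul_of_nonneg_right this (abs_nonneg _)
    have heq : l * f₁ x + (1 - l) * f₂ x
        = (μ * f₁ x + (1 - μ) * f₂ x) + (l - μ) * (f₁ x - f₂ x) := by ring
    show l * f₁ x + (1 - l) * f₂ x ≤ ph X f₁ f₂ μ + C * |l - μ|
    rw [heq]; linarith
  have : LipschitzWith C.toNNReal (ph X f₁ f₂) := by
    refine LipschitzWith.of_dist_le_mul fun l μ => ?_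
    rw [Real.dist_eq, Real.dist_eq, abs_sub_le_iff]
    have hCC : (C.toNNReal : ℝ) = C := Real.coe_toNNReal C hC0
    constructor
    · have := key l μ
      rw [hCC]; rw [mul_comm] at this ⊢; linarith
    · have := key μ l
      rw [abs_sub_comm] at this
      rw [hCC]; rw [mul_comm] at this ⊢; linarith
  exact this.continuous

/-- Danskin-type lemma: at a minimizer `l < 1` of `φ` there is a maximizer `x`
with `f₂ x ≤ f₁ x`. -/
lemma danskin (hX : X.Nonempty) (hXc : IsCompact X)
    (hf₁ : ContinuousOn f₁ X) (hf₂ : ContinuousOn f₂ X)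
    {l : ℝ} (hl0 : 0 ≤ l) (hl1 : l < 1)
    (hmin : ∀ μ ∈ Icc (0:ℝ) 1, ph X f₁ f₂ l ≤ ph X f₁ f₂ μ) :
    ∃ x ∈ X, l * f₁ x + (1 - l) * f₂ x = ph X f₁ f₂ l ∧ f₂ x ≤ f₁ x := by
  set lam : ℕ → ℝ := fun n => l + (1 - l) / (n + 1) with hlam_def
  have hpos : ∀ n : ℕ, (0:ℝ) < (n:ℝ) + 1 := fun n => by positivity
  have hlam_gt : ∀ n, l < lam n := by
    intro n
    have : 0 < (1 - l) / ((n:ℝ) + 1) := div_pos (by linarith) (hpos n)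
    simp only [hlam_def]; linarith
  have hlam_mem : ∀ n, lam n ∈ Icc (0:ℝ) 1 := by
    intro n
    refine ⟨le_of_lt (lt_of_le_of_lt hl0 (hlam_gt n)), ?_⟩
    have h1 : (1 - l) / ((n:ℝ) + 1) ≤ (1 - l) := by
      rw [div_le_iff₀ (hpos n)]
      nlinarith [Nat.cast_nonneg (α := ℝ) n]
    simp only [hlam_def]; linarith
  have hlam_tendsto : Tendsto lam atTop (𝓝 l) := by
    have h0 : Tendsto (fun n : ℕ => (1 - l) * (1 / ((n:ℝ) + 1))) atTop (𝓝 ((1 - l) * 0)) :=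
      tendsto_const_nhds.mul tendsto_one_div_add_atTop_nhds_zero_nat
    have : Tendsto (fun n : ℕ => l + (1 - l) * (1 / ((n:ℝ) + 1))) atTop (𝓝 (l + (1-l) * 0)) :=
      tendsto_const_nhds.add h0
    simpa [hlam_def, mul_one_div, div_eq_mul_inv] using this
  choose x hxX hxmax using fun n => exists_max hX hXc hf₁ hf₂ (lam n)
  have hstep : ∀ n, f₂ (x n) ≤ f₁ (x n) := by
    intro n
    have h1 : l * f₁ (x n) + (1 - l) * f₂ (x n) ≤ ph X f₁ f₂ l :=
      le_ph hXc hf₁ hf₂ (hxX n) l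
    have h2 : ph X f₁ f₂ l ≤ ph X f₁ f₂ (lam n) := hmin _ (hlam_mem n)
    have h3 := hxmax n
    have h4 : l * f₁ (x n) + (1 - l) * f₂ (x n)
        ≤ lam n * f₁ (x n) + (1 - lam n) * f₂ (x n) := by
      rw [h3]; linarith
    nlinarith [hlam_gt n]
  obtain ⟨a, haX, φ, hφ, hφt⟩ := hXc.tendsto_subseq hxX
  have hxt : Tendsto (fun k => x (φ k)) atTop (𝓝[X] a) :=
    tendsto_nhdsWithin_iff.mpr ⟨hφt, Eventually.of_forall fun k => hxX _⟩
  have hft1 : Tendsto (fun k => f₁ (x (φ k))) atTop (𝓝 (f₁ a)) := (hf₁ a haX).tendsto.comp hxt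
  have hft2 : Tendsto (fun k => f₂ (x (φ k))) atTop (𝓝 (f₂ a)) := (hf₂ a haX).tendsto.comp hxt
  have hlamφ : Tendsto (fun k => lam (φ k)) atTop (𝓝 l) :=
    hlam_tendsto.comp hφ.tendsto_atTop
  have hG : Tendsto (fun k => lam (φ k) * f₁ (x (φ k)) + (1 - lam (φ k)) * f₂ (x (φ k)))
      atTop (𝓝 (l * f₁ a + (1 - l) * f₂ a)) :=
    (hlamφ.mul hft1).add ((tendsto_const_nhds.sub hlamφ).mul hft2)
  have hPh : Tendsto (fun k => lam (φ k) * f₁ (x (φ k)) + (1 - lam (φ k)) * f₂ (x (φ k)))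
      atTop (𝓝 (ph X f₁ f₂ l)) := by
    have hc : Tendsto (fun k => ph X f₁ f₂ (lam (φ k))) atTop (𝓝 (ph X f₁ f₂ l)) :=
      ((ph_continuous hX hXc hf₁ hf₂).tendsto l).comp hlamφ
    refine hc.congr fun k => ?_
    exact (hxmax (φ k)).symm
  have heq : l * f₁ a + (1 - l) * f₂ a = ph X f₁ f₂ l := tendsto_nhds_unique hG hPh
  have hfa : f₂ a ≤ f₁ a := by
    have h0 : (0:ℝ) ≤ f₁ a - f₂ a :=
      ge_of_tendsto (hft1.sub hft2) (Eventually.of_forall fun k => by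
        have := hstep (φ k); linarith)
    linarith
  exact ⟨a, haX, heq, hfa⟩

lemma ph_swap (l : ℝ) : ph X f₂ f₁ (1 - l) = ph X f₁ f₂ l := by
  unfold ph
  congr 1
  ext v
  constructor
  · rintro ⟨y, hy, rfl⟩; exact ⟨y, hy, by ring⟩
  · rintro ⟨y, hy, rfl⟩; exact ⟨y, hy, by ring⟩

lemma danskin' (hX : X.Nonempty) (hXc : IsCompact X)
    (hf₁ : ContinuousOn f₁ X) (hf₂ : ContinuousOn f₂ X)
    {l : ℝ} (hl0 : 0 < l) (hl1 : l ≤ 1)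
    (hmin : ∀ μ ∈ Icc (0:ℝ) 1, ph X f₁ f₂ l ≤ ph X f₁ f₂ μ) :
    ∃ x ∈ X, l * f₁ x + (1 - l) * f₂ x = ph X f₁ f₂ l ∧ f₁ x ≤ f₂ x := by
  have hmin' : ∀ μ ∈ Icc (0:ℝ) 1, ph X f₂ f₁ (1 - l) ≤ ph X f₂ f₁ μ := by
    intro μ hμ
    have h1 : 1 - μ ∈ Icc (0:ℝ) 1 := ⟨by linarith [hμ.2], by linarith [hμ.1]⟩
    have h2 : ph X f₂ f₁ μ = ph X f₁ f₂ (1 - μ) := by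
      rw [← ph_swap (1 - μ)]; norm_num
    rw [ph_swap, h2]
    exact hmin _ h1
  obtain ⟨x, hx, heq, hle⟩ := danskin hX hXc hf₂ hf₁ (by linarith) (by linarith) hmin'
  refine ⟨x, hx, ?_, hle⟩
  rw [← ph_swap l]
  rw [← heq]; ring

end PrimalDualAux

open PrimalDualAux

/-- Strong duality between the primal two-point max–min formulation and the
dual min–max formulation of the sample-complexity lower bound (Theorem 2). -/
theorem primal_dual_equality
    (X : Set ℝ) (hX : X.Nonempty) (hXc : IsCompact X)
    (f₁ f₂ : ℝ → ℝ) (hf₁ : ContinuousOn f₁ X) (hf₂ : ContinuousOn f₂ X)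
    (hf₁pos : ∀ x ∈ X, 0 < f₁ x) (hf₂pos : ∀ x ∈ X, 0 < f₂ x) :
    sSup {v : ℝ | ∃ w ∈ Icc (0:ℝ) 1, ∃ x₁ ∈ X, ∃ x₂ ∈ X,
        v = min (w * f₁ x₁ + (1 - w) * f₁ x₂) (w * f₂ x₁ + (1 - w) * f₂ x₂)} =
    sInf {v : ℝ | ∃ l ∈ Icc (0:ℝ) 1,
        v = sSup ((fun x => l * f₁ x + (1 - l) * f₂ x) '' X)} := by
  obtain ⟨x₀, hx₀⟩ := hX
  have hXne : X.Nonempty := ⟨x₀, hx₀⟩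
  set S := {v : ℝ | ∃ w ∈ Icc (0:ℝ) 1, ∃ x₁ ∈ X, ∃ x₂ ∈ X,
      v = min (w * f₁ x₁ + (1 - w) * f₁ x₂) (w * f₂ x₁ + (1 - w) * f₂ x₂)} with hS_def
  set T := {v : ℝ | ∃ l ∈ Icc (0:ℝ) 1,
      v = sSup ((fun x => l * f₁ x + (1 - l) * f₂ x) '' X)} with hT_def
  have hT_ph : ∀ l ∈ Icc (0:ℝ) 1, ph X f₁ f₂ l ∈ T := fun l hl => ⟨l, hl, rfl⟩
  -- weak duality
  have weak : ∀ v ∈ S, ∀ l ∈ Icc (0:ℝ) 1, v ≤ ph X f₁ f₂ l := by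
    rintro v ⟨w, ⟨hw0, hw1⟩, x₁, hx₁, x₂, hx₂, rfl⟩ l ⟨hl0, hl1⟩
    set A := w * f₁ x₁ + (1 - w) * f₁ x₂ with hA
    set B := w * f₂ x₁ + (1 - w) * f₂ x₂ with hB
    have h1 : l * f₁ x₁ + (1 - l) * f₂ x₁ ≤ ph X f₁ f₂ l := le_ph hXc hf₁ hf₂ hx₁ l
    have h2 : l * f₁ x₂ + (1 - l) * f₂ x₂ ≤ ph X f₁ f₂ l := le_ph hXc hf₁ hf₂ hx₂ l
    have hmA : min A B ≤ A := min_le_left _ _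
    have hmB : min A B ≤ B := min_le_right _ _
    have hcomb : l * A + (1 - l) * B
        = w * (l * f₁ x₁ + (1 - l) * f₂ x₁) + (1 - w) * (l * f₁ x₂ + (1 - l) * f₂ x₂) := by
      rw [hA, hB]; ring
    nlinarith [mul_nonneg hw0 (sub_nonneg.2 h1), mul_nonneg (by linarith : (0:ℝ) ≤ 1 - w) (sub_nonneg.2 h2),
      mul_nonneg hl0 (sub_nonneg.2 hmA), mul_nonneg (by linarith : (0:ℝ) ≤ 1 - l) (sub_nonneg.2 hmB)]
  have hSne : S.Nonempty := by
    refine ⟨_, ⟨1, by norm_num, x₀, hx₀, x₀, hx₀, rfl⟩⟩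
  have hbddS : BddAbove S :=
    ⟨ph X f₁ f₂ 0, fun v hv => weak v hv 0 (by norm_num)⟩
  have hTne : T.Nonempty := ⟨_, hT_ph 0 (by norm_num)⟩
  have hbddT : BddBelow T := by
    refine ⟨min (f₁ x₀) (f₂ x₀), ?_⟩
    rintro u ⟨l, ⟨hl0, hl1⟩, rfl⟩
    have h1 : l * f₁ x₀ + (1 - l) * f₂ x₀ ≤ ph X f₁ f₂ l := le_ph hXc hf₁ hf₂ hx₀ l
    have hm1 : min (f₁ x₀) (f₂ x₀) ≤ f₁ x₀ := min_le_left _ _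
    have hm2 : min (f₁ x₀) (f₂ x₀) ≤ f₂ x₀ := min_le_right _ _
    have : min (f₁ x₀) (f₂ x₀) ≤ l * f₁ x₀ + (1 - l) * f₂ x₀ := by nlinarith
    exact this.trans h1
  apply le_antisymm
  · refine csSup_le hSne fun v hv => le_csInf hTne ?_
    rintro u ⟨l, hl, rfl⟩
    exact weak v hv l hl
  · -- strong duality
    obtain ⟨l, hlI, hlmin⟩ := isCompact_Icc.exists_isMinOn (⟨0, by norm_num⟩ : (Icc (0:ℝ) 1).Nonempty)
      (ph_continuous hXne hXc hf₁ hf₂).continuousOn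
    have hmin : ∀ μ ∈ Icc (0:ℝ) 1, ph X f₁ f₂ l ≤ ph X f₁ f₂ μ := fun μ hμ => hlmin hμ
    have hstep : sInf T ≤ ph X f₁ f₂ l := csInf_le hbddT (hT_ph l hlI)
    refine hstep.trans ?_
    obtain ⟨hl0, hl1⟩ := hlI
    -- exhibit a primal point with value ph l
    suffices h : ph X f₁ f₂ l ∈ S from le_csSup hbddS h
    rcases lt_or_eq_of_le hl1 with hl1' | hl1'
    · rcases lt_or_eq_of_le hl0 with hl0' | hl0'
      · -- interior case
        obtain ⟨x₁, hx₁, he₁, hba₁⟩ := danskin hXne hXc hf₁ hf₂ hl0 hl1' hmin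
        obtain ⟨x₂, hx₂, he₂, hab₂⟩ := danskin' hXne hXc hf₁ hf₂ hl0' hl1 hmin
        have ha : 0 ≤ f₁ x₁ - f₂ x₁ := by linarith
        have hb : 0 ≤ f₂ x₂ - f₁ x₂ := by linarith
        by_cases hab : f₁ x₁ - f₂ x₁ + (f₂ x₂ - f₁ x₂) = 0
        · -- degenerate: both differences vanish; single point x₁ with w = 1
          have ha0 : f₁ x₁ - f₂ x₁ = 0 := by linarith
          refine ⟨1, by norm_num, x₁, hx₁, x₁, hx₁, ?_⟩
          have : ph X f₁ f₂ l = f₁ x₁ := by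
            rw [← he₁]; linear_combination (l - 1) * ha0
          rw [this]
          have h2 : f₂ x₁ = f₁ x₁ := by linarith
          rw [h2]; norm_num
        · set w := (f₂ x₂ - f₁ x₂) / (f₁ x₁ - f₂ x₁ + (f₂ x₂ - f₁ x₂)) with hw_def
          have hsum_pos : 0 < f₁ x₁ - f₂ x₁ + (f₂ x₂ - f₁ x₂) :=
            lt_of_le_of_ne (by linarith) (Ne.symm hab)
          have hw0 : 0 ≤ w := div_nonneg hb hsum_pos.le
          have hw1 : w ≤ 1 := by
            rw [hw_def, div_le_one hsum_pos]; linarith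
          have hkey : w * (f₁ x₁ - f₂ x₁) = (1 - w) * (f₂ x₂ - f₁ x₂) := by
            rw [hw_def]; field_simp; ring
          have hAB : w * f₁ x₁ + (1 - w) * f₁ x₂ = w * f₂ x₁ + (1 - w) * f₂ x₂ := by
            linear_combination hkey
          have hval : w * f₁ x₁ + (1 - w) * f₁ x₂ = ph X f₁ f₂ l := by
            have hsum : l * (w * f₁ x₁ + (1 - w) * f₁ x₂)
                + (1 - l) * (w * f₂ x₁ + (1 - w) * f₂ x₂) = ph X f₁ f₂ l := by
              linear_combination w * he₁ + (1 - w) * he₂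
            linear_combination hsum + (1 - l) * hAB
          refine ⟨w, ⟨hw0, hw1⟩, x₁, hx₁, x₂, hx₂, ?_⟩
          rw [← hAB, min_self, hval]
      · -- l = 0
        obtain ⟨x₁, hx₁, he₁, hba₁⟩ := danskin hXne hXc hf₁ hf₂ hl0 hl1' hmin
        refine ⟨1, by norm_num, x₁, hx₁, x₁, hx₁, ?_⟩
        have hph : ph X f₁ f₂ l = f₂ x₁ := by rw [← he₁, ← hl0']; ring
        rw [hph]
        norm_num
        exact hba₁
    · -- l = 1
      obtain ⟨x₁, hx₁, he₁, hab₁⟩ := danskin' hXne hXc hf₁ hf₂ (by linarith) hl1 hmin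
      refine ⟨1, by norm_num, x₁, hx₁, x₁, hx₁, ?_⟩
      have hph : ph X f₁ f₂ l = f₁ x₁ := by rw [← he₁, hl1']; ring
      rw [hph]
      norm_num
      exact hab₁
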